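/- The map c ↦ Δ_c from coloring vectors in ℤⁿ to polydiagonal subspaces of ℝⁿ is injective: distinct coloring vectors give distinct subspaces. -/
import Mathlib


/-- The maximum of `c₁,…,c_{i-1}` (0-indexed: `c 0, …, c (i-1)`), for `i > 0`. -/
def maxBelow {n : ℕ} (c : Fin n → ℤ) (i : Fin n) (hi : 0 < i.val) : ℤ :=
  (Finset.Iio i).sup' ⟨⟨0, lt_of_le_of_lt (Nat.zero_le _) i.isLt⟩, Finset.mem_Iio.mpr hi⟩ c

/-- `c` is a coloring vector: the first component is 0 or 1, and each later component
satisfies `-mᵢ ≤ cᵢ ≤ 1 + mᵢ` where `mᵢ` is the max of the preceding components. -/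
def IsColoringVec {n : ℕ} (c : Fin n → ℤ) : Prop :=
  (∀ h0 : 0 < n, c ⟨0, h0⟩ = 0 ∨ c ⟨0, h0⟩ = 1) ∧
  ∀ (i : Fin n) (hi : 0 < i.val), -maxBelow c i hi ≤ c i ∧ c i ≤ 1 + maxBelow c i hi

/-- The polydiagonal subspace of `c`, as a subset of `ℝⁿ`. -/
def DeltaSet {n : ℕ} (c : Fin n → ℤ) : Set (Fin n → ℝ) :=
  {x | ∀ i j : Fin n, (c i = c j → x i = x j) ∧ (c i = -c j → x i = -x j)}

lemma cast_mem_deltaSet {n : ℕ} (c : Fin n → ℤ) :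
    (fun i => (c i : ℝ)) ∈ DeltaSet c := by
  intro i j
  refine ⟨fun hij => ?_, fun hij => ?_⟩
  · show (c i : ℝ) = c j; exact_mod_cast hij
  · show (c i : ℝ) = -(c j : ℝ); push_cast [hij]; ring

/-- coverage: every positive value ≤ maxBelow appears (up to sign) among earlier entries. -/
lemma coverage {n : ℕ} (c : Fin n → ℤ) (hc : IsColoringVec c) :
    ∀ (i : Fin n) (hi : 0 < i.val) (v : ℤ), 0 < v → v ≤ maxBelow c i hi →
      ∃ j : Fin n, j < i ∧ (c j = v ∨ c j = -v) := by
  have key : ∀ m : ℕ, ∀ (i : Fin n), i.val = m → ∀ (hi : 0 < i.val) (v : ℤ),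
      0 < v → v ≤ maxBelow c i hi → ∃ j : Fin n, j < i ∧ (c j = v ∨ c j = -v) := by
    intro m
    induction m using Nat.strong_induction_on with
    | _ m IH =>
      intro i him hi v hv hvm
      obtain ⟨j0, hj0mem, hj0⟩ := Finset.exists_mem_eq_sup' (s := Finset.Iio i)
        ⟨⟨0, lt_of_le_of_lt (Nat.zero_le _) i.isLt⟩, Finset.mem_Iio.mpr hi⟩ c
      rw [Finset.mem_Iio] at hj0mem
      have hmax : maxBelow c i hi = c j0 := hj0
      rcases eq_or_lt_of_le hvm with hveq | hvlt
      · exact ⟨j0, hj0mem, Or.inl (by rw [← hmax, ← hveq])⟩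
      · -- v < maxBelow = c j0, so c j0 ≥ 2, so j0 ≠ 0
        have hcj0 : 2 ≤ c j0 := by omega
        have hj0pos : 0 < j0.val := by
          by_contra hz
          have : j0 = ⟨0, lt_of_le_of_lt (Nat.zero_le _) i.isLt⟩ := by
            apply Fin.ext; show j0.val = 0; omega
          rcases hc.1 (lt_of_le_of_lt (Nat.zero_le _) i.isLt) with h0 | h0 <;>
          · rw [this, h0] at hcj0; omega
        have hbound := (hc.2 j0 hj0pos).2
        have hvle : v ≤ maxBelow c j0 hj0pos := by omega
        obtain ⟨j, hjlt, hj⟩ := IH j0.val (by omega) j0 rfl hj0pos v hv hvle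
        exact ⟨j, lt_trans hjlt hj0mem, hj⟩
  intro i hi v hv hvm
  exact key i.val i rfl hi v hv hvm

lemma maxBelow_congr {n : ℕ} (c₁ c₂ : Fin n → ℤ) (i : Fin n) (hi : 0 < i.val)
    (hlt : ∀ j : Fin n, j < i → c₁ j = c₂ j) :
    maxBelow c₁ i hi = maxBelow c₂ i hi := by
  apply Finset.sup'_congr
  · rfl
  · intro j hj
    exact hlt j (Finset.mem_Iio.mp hj)

theorem deltaSet_injective {n : ℕ} (c₁ c₂ : Fin n → ℤ)
    (h₁ : IsColoringVec c₁) (h₂ : IsColoringVec c₂)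
    (h : DeltaSet c₁ = DeltaSet c₂) : c₁ = c₂ := by
  -- extract the relations
  have mem1 : (fun i => (c₁ i : ℝ)) ∈ DeltaSet c₂ := h ▸ cast_mem_deltaSet c₁
  have mem2 : (fun i => (c₂ i : ℝ)) ∈ DeltaSet c₁ := h.symm ▸ cast_mem_deltaSet c₂
  have rel_eq : ∀ i j : Fin n, c₁ i = c₁ j ↔ c₂ i = c₂ j := by
    intro i j
    constructor
    · intro hij
      have : (c₂ i : ℝ) = c₂ j := (mem2 i j).1 hij
      exact_mod_cast this
    · intro hij
      have : (c₁ i : ℝ) = c₁ j := (mem1 i j).1 hij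
      exact_mod_cast this
  have rel_neg : ∀ i j : Fin n, c₁ i = -c₁ j ↔ c₂ i = -c₂ j := by
    intro i j
    constructor
    · intro hij
      have : (c₂ i : ℝ) = -(c₂ j : ℝ) := (mem2 i j).2 hij
      exact_mod_cast this
    · intro hij
      have : (c₁ i : ℝ) = -(c₁ j : ℝ) := (mem1 i j).2 hij
      exact_mod_cast this
  funext i
  -- strong induction on i.val
  have key : ∀ m : ℕ, ∀ i : Fin n, i.val = m → c₁ i = c₂ i := by
    intro m
    induction m using Nat.strong_induction_on with
    | _ m IH =>
      intro i him
      rcases Nat.eq_zero_or_pos i.val with h0 | hi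
      · -- i = 0
        have hieq : i = ⟨0, i.pos⟩ := Fin.ext h0
        have hn : 0 < n := i.pos
        have hd := rel_neg i i
        rcases h₁.1 hn with ha | ha <;> rcases h₂.1 hn with hb | hb <;>
          rw [hieq, ha, hb] <;> rw [hieq, ha, hb] at hd <;> omega
      · -- 0 < i.val
        have IH' : ∀ j : Fin n, j < i → c₁ j = c₂ j := fun j hj =>
          IH j.val (by omega) j rfl
        have hmeq : maxBelow c₁ i hi = maxBelow c₂ i hi := maxBelow_congr c₁ c₂ i hi IH'
        by_cases hex : ∃ j : Fin n, j < i ∧ (c₁ i = c₁ j ∨ c₁ i = -c₁ j)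
        · obtain ⟨j, hji, hcase⟩ := hex
          rcases hcase with hc | hc
          · have := (rel_eq i j).1 hc
            rw [hc, IH' j hji, this]
          · have := (rel_neg i j).1 hc
            rw [hc, IH' j hji, this]
        · push_neg at hex
          by_cases h0 : c₁ i = 0
          · have : c₁ i = -c₁ i := by omega
            have := (rel_neg i i).1 this
            omega
          · -- c₁ i is a new nonzero value: must be 1 + maxBelow
            set M := maxBelow c₁ i hi with hM
            have hb1 := h₁.2 i hi
            have hnew1 : c₁ i = 1 + M := by
              by_contra hne
              -- then -M ≤ c₁ i ≤ M, c₁ i ≠ 0, coverage gives contradiction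
              have habs : 0 < |c₁ i| ∧ |c₁ i| ≤ M := by
                rcases abs_cases (c₁ i) with ⟨he, _⟩ | ⟨he, _⟩ <;> omega
              obtain ⟨j, hji, hj⟩ := coverage c₁ h₁ i hi |c₁ i| habs.1 habs.2
              have hne' := hex j hji
              rcases abs_cases (c₁ i) with ⟨he, _⟩ | ⟨he, _⟩ <;> rw [he] at hj <;>
                rcases hj with hj | hj <;> omega
            -- similarly for c₂
            have hex2 : ∀ j : Fin n, j < i → c₂ i ≠ c₂ j ∧ c₂ i ≠ -c₂ j := by
              intro j hji
              constructor
              · intro hcj; exact ((hex j hji).1 ((rel_eq i j).2 hcj))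
              · intro hcj; exact ((hex j hji).2 ((rel_neg i j).2 hcj))
            have h02 : c₂ i ≠ 0 := by
              intro hz
              have : c₂ i = -c₂ i := by omega
              have := (rel_neg i i).2 this
              omega
            have hb2 := h₂.2 i hi
            have hnew2 : c₂ i = 1 + maxBelow c₂ i hi := by
              by_contra hne
              have habs : 0 < |c₂ i| ∧ |c₂ i| ≤ maxBelow c₂ i hi := by
                rcases abs_cases (c₂ i) with ⟨he, _⟩ | ⟨he, _⟩ <;> omega
              obtain ⟨j, hji, hj⟩ := coverage c₂ h₂ i hi |c₂ i| habs.1 habs.2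
              have hne' := hex2 j hji
              rcases abs_cases (c₂ i) with ⟨he, _⟩ | ⟨he, _⟩ <;> rw [he] at hj <;>
                rcases hj with hj | hj <;> omega
            rw [hnew1, hnew2, hmeq]
  exact key i.val i rfl
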